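/- Let K = mN − N + 2 and let M(P2) be the 3×3 real matrix with rows (−(m−1)/(Kα), (m−1)²/(2Kα), 0), (1 − N/(Kα), −(2βK + N(m−1) + 4)/(2Kα), −1), (0, 0, (σ(m−1)+2(p−1))/(2Kα)). Then λ3 := (σ(m−1)+2(p−1))/(2Kα) is a positive eigenvalue of M(P2), and every complex eigenvalue z of M(P2) with z ≠ λ3 satisfies Re z < 0. (Indeed the upper-left 2×2 block has trace −((N+2)(m−1) + 2Kβ + 4)/(2Kα) < 0 and determinant (m−1)/(2Kα²) > 0.) -/
import Mathlib

open Real Filter Set Topology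

noncomputable def alphaC (m p σ : ℝ) : ℝ := (σ + 2) / (σ * (m - 1) + 2 * (p - 1))

noncomputable def betaC (m p σ : ℝ) : ℝ := (m - p) / (σ * (m - 1) + 2 * (p - 1))

lemma charpoly_eval' {n : ℕ} (A : Matrix (Fin n) (Fin n) ℂ) (z : ℂ) :
    A.charpoly.eval z = (Matrix.diagonal (fun _ => z) - A).det := by
  rw [Matrix.charpoly, ← Polynomial.coe_evalRingHom, RingHom.map_det]
  congr 1
  ext i j
  by_cases h : i = j
  · subst h
    simp [Matrix.charmatrix_apply_eq]
  · simp [Matrix.charmatrix_apply_ne _ _ _ h, Matrix.diagonal_apply_ne _ h, h]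

lemma quad_neg_re (T D : ℝ) (hT : T < 0) (hD : 0 < D) (z : ℂ)
    (h : z * z - (T : ℂ) * z + (D : ℂ) = 0) : z.re < 0 := by
  rw [Complex.ext_iff] at h
  simp only [Complex.add_re, Complex.sub_re, Complex.mul_re, Complex.mul_im,
    Complex.ofReal_re, Complex.ofReal_im, Complex.add_im, Complex.sub_im,
    Complex.zero_re, Complex.zero_im] at h
  obtain ⟨hre, him⟩ := h
  have him' : z.im * (2 * z.re - T) = 0 := by linarith [him]
  rcases mul_eq_zero.mp him' with h0 | h0
  · rw [h0] at hre
    by_contra hc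
    push_neg at hc
    nlinarith
  · nlinarith

set_option maxHeartbeats 1000000 in
theorem eigenvalues_at_P2 (m p σ : ℝ) (N : ℕ) (hm : 1 < m) (hp0 : 0 < p) (hp1 : p < 1)
    (hσ : 2 * (1 - p) / (m - 1) < σ) (hN : 1 ≤ N)
    (K : ℝ) (hK : K = m * (N : ℝ) - (N : ℝ) + 2)
    (M : Matrix (Fin 3) (Fin 3) ℝ)
    (hM : M = !![-(m - 1) / (K * alphaC m p σ), (m - 1) ^ 2 / (2 * K * alphaC m p σ), 0;
        1 - (N : ℝ) / (K * alphaC m p σ),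
          -(2 * betaC m p σ * K + (N : ℝ) * (m - 1) + 4) / (2 * K * alphaC m p σ), -1;
        0, 0, (σ * (m - 1) + 2 * (p - 1)) / (2 * K * alphaC m p σ)])
    (l3 : ℝ) (hl3 : l3 = (σ * (m - 1) + 2 * (p - 1)) / (2 * K * alphaC m p σ)) :
    0 < l3 ∧
    (M.map Complex.ofReal).charpoly.IsRoot (l3 : ℂ) ∧
    (∀ z : ℂ, (M.map Complex.ofReal).charpoly.IsRoot z → z ≠ (l3 : ℂ) → z.re < 0) ∧
    -(((N : ℝ) + 2) * (m - 1) + 2 * K * betaC m p σ + 4) / (2 * K * alphaC m p σ) < 0 ∧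
    0 < (m - 1) / (2 * K * alphaC m p σ ^ 2) := by
  have hm1 : (0:ℝ) < m - 1 := by linarith
  have hL : 0 < σ * (m - 1) + 2 * (p - 1) := by
    have := (div_lt_iff₀ hm1).mp hσ
    nlinarith
  have hσ0 : 0 < σ := lt_trans (div_pos (by linarith) hm1) hσ
  have hα : 0 < alphaC m p σ := div_pos (by linarith) hL
  have hβ : 0 < betaC m p σ := div_pos (by linarith) hL
  have hN1 : (1:ℝ) ≤ (N : ℝ) := by exact_mod_cast hN
  have hKpos : 0 < K := by rw [hK]; nlinarith
  -- abbreviations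
  set α := alphaC m p σ with hαdef
  set β := betaC m p σ with hβdef
  set a : ℝ := -(m - 1) / (K * α) with ha
  set b : ℝ := (m - 1) ^ 2 / (2 * K * α) with hb
  set c : ℝ := 1 - (N : ℝ) / (K * α) with hc
  set d : ℝ := -(2 * β * K + (N : ℝ) * (m - 1) + 4) / (2 * K * α) with hd
  have hl3pos : 0 < l3 := by rw [hl3]; positivity
  have hT : a + d = -(((N : ℝ) + 2) * (m - 1) + 2 * K * β + 4) / (2 * K * α) := by
    rw [ha, hd]
    field_simp
    ring
  have hTneg : a + d < 0 := by
    rw [hT]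
    apply div_neg_of_neg_of_pos
    · nlinarith
    · positivity
  have hαβ : α = (1 + 2 * β) / (m - 1) := by
    rw [hαdef, hβdef, alphaC, betaC]
    field_simp
    ring
  have hD : a * d - b * c = (m - 1) / (2 * K * α ^ 2) := by
    have h2β : (0:ℝ) < 1 + 2 * β := by linarith
    have hK0 : m * (N : ℝ) - (N : ℝ) + 2 ≠ 0 := by nlinarith
    rw [ha, hb, hc, hd, hαβ, hK]
    field_simp [hm1.ne', h2β.ne', hK0]
    ring
  have hDpos : 0 < a * d - b * c := by
    rw [hD]; positivity
  have hMc : M.map Complex.ofReal =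
      !![(a : ℂ), (b : ℂ), 0; (c : ℂ), (d : ℂ), -1; 0, 0, (l3 : ℂ)] := by
    subst hM
    ext i j
    fin_cases i <;> fin_cases j <;>
      simp [Matrix.map_apply, ha, hb, hc, hd, hl3]
  have key : ∀ z : ℂ, (M.map Complex.ofReal).charpoly.IsRoot z ↔
      (z - (l3 : ℂ)) * ((z - (a : ℂ)) * (z - (d : ℂ)) - (b : ℂ) * (c : ℂ)) = 0 := by
    intro z
    have hdet : (Matrix.diagonal (fun _ : Fin 3 => z) -
        !![(a : ℂ), (b : ℂ), 0; (c : ℂ), (d : ℂ), -1; 0, 0, (l3 : ℂ)]).det =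
        (z - (l3 : ℂ)) * ((z - (a : ℂ)) * (z - (d : ℂ)) - (b : ℂ) * (c : ℂ)) := by
      rw [Matrix.det_fin_three]
      simp [Matrix.diagonal]
      ring
    rw [Polynomial.IsRoot, charpoly_eval', hMc, hdet]
  refine ⟨hl3pos, ?_, ?_, by rw [← hT]; exact hTneg, by rw [← hD]; exact hDpos⟩
  · rw [key]
    ring
  · intro z hz hzne
    rw [key] at hz
    rcases mul_eq_zero.mp hz with h0 | h0
    · exact absurd (sub_eq_zero.mp h0) hzne
    · refine quad_neg_re (a + d) (a * d - b * c) hTneg hDpos z ?_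
      push_cast
      linear_combination h0
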